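/- Let v_1, …, v_n be vectors in a real inner product space such that each (v_i, v_i) ≥ 2 and (v_i, v_j) = 1 for all i ≠ j. Then v_1, …, v_n are linearly independent. -/

import Mathlib

theorem linear_independent_of_gram_conditions {V : Type*}
    [NormedAddCommGroup V] [InnerProductSpace ℝ V]
    (n : ℕ) (v : Fin n → V)
    (hdiag : ∀ i, (2 : ℝ) ≤ inner ℝ (v i) (v i))
    (hoff : ∀ i j, i ≠ j → (inner ℝ (v i) (v j) : ℝ) = 1) :
    LinearIndependent ℝ v := by
  rw [Fintype.linearIndependent_iff]
  intro c h
  set S := ∑ i, c i with hS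
  have key : ∀ j, c j * ((inner ℝ (v j) (v j) : ℝ) - 1) + S = 0 := by
    intro j
    have h0 : (inner ℝ (v j) (∑ i, c i • v i) : ℝ) = 0 := by rw [h, inner_zero_right]
    rw [inner_sum] at h0
    simp only [real_inner_smul_right] at h0
    have split : ∑ i, c i * (inner ℝ (v j) (v i) : ℝ)
        = (∑ i, c i * ((inner ℝ (v j) (v i) : ℝ) - 1)) + S := by
      rw [hS, ← Finset.sum_add_distrib]
      congr 1; ext i; ring
    have single : (∑ i, c i * ((inner ℝ (v j) (v i) : ℝ) - 1))
        = c j * ((inner ℝ (v j) (v j) : ℝ) - 1) := by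
      apply Finset.sum_eq_single
      · intro i _ hij
        rw [hoff j i (Ne.symm hij)]; ring
      · intro hj; exact absurd (Finset.mem_univ j) hj
    rw [split, single] at h0
    exact h0
  have sum0 : (∑ j, c j * c j * ((inner ℝ (v j) (v j) : ℝ) - 1)) + S * S = 0 := by
    have : ∑ j, c j * (c j * ((inner ℝ (v j) (v j) : ℝ) - 1) + S) = 0 :=
      Finset.sum_eq_zero fun j _ => by rw [key j]; ring
    calc (∑ j, c j * c j * ((inner ℝ (v j) (v j) : ℝ) - 1)) + S * S
        = ∑ j, c j * (c j * ((inner ℝ (v j) (v j) : ℝ) - 1) + S) := by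
          simp only [mul_add, Finset.sum_add_distrib, ← Finset.sum_mul, ← hS, mul_assoc]
      _ = 0 := this
  have hnn : ∀ j ∈ Finset.univ, 0 ≤ c j * c j * ((inner ℝ (v j) (v j) : ℝ) - 1) := by
    intro j _
    have := hdiag j
    nlinarith [mul_self_nonneg (c j)]
  have hsum_le : (∑ j, c j * c j * ((inner ℝ (v j) (v j) : ℝ) - 1)) = 0 := by
    nlinarith [Finset.sum_nonneg hnn, mul_self_nonneg S]
  intro i
  have := (Finset.sum_eq_zero_iff_of_nonneg hnn).mp hsum_le i (Finset.mem_univ i)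
  have hd := hdiag i
  nlinarith [mul_self_nonneg (c i)]
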